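/- arXiv:0912.5310 — 6 statements merged into one kernel-verified Lean document; each statement's English description precedes it below -/
import Mathlib

section
/- Let p be an odd prime and s : ZMod p → ℕ the canonical lift. If a, b in ZMod p satisfy a + 2b = 0 with a, b nonzero, then the minimum over nonzero x in ZMod p of s(x*a) + s(x*b) equals (p+1)/2. -/
theorem stmt_1 (p : ℕ) (hp : p.Prime) (hodd : p ≠ 2) (a b : ZMod p)
    (ha : a ≠ 0) (hb : b ≠ 0) (hab : a + 2 * b = 0) :
    IsLeast {n : ℕ | ∃ x : ZMod p, x ≠ 0 ∧ n = (x * a).val + (x * b).val}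
      ((p + 1) / 2) := by
  haveI : Fact p.Prime := ⟨hp⟩
  have hp2 : 2 < p := lt_of_le_of_ne hp.two_le (Ne.symm hodd)
  have hpodd : p % 2 = 1 := (hp.eq_two_or_odd).resolve_left hodd
  have ha' : a = -(2 * b) := by linear_combination hab
  have hval2 : (2 : ZMod p).val = 2 := by
    have : (2 : ZMod p) = ((2 : ℕ) : ZMod p) := by norm_cast
    rw [this, ZMod.val_natCast, Nat.mod_eq_of_lt hp2]
  have h2ne : (2 : ZMod p) ≠ 0 := by
    intro h
    rw [h, ZMod.val_zero] at hval2
    omega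
  constructor
  · -- membership: witness x with x*b = (p-1)/2
    set c : ZMod p := (((p - 1) / 2 : ℕ) : ZMod p) with hc
    have hcval : c.val = (p - 1) / 2 := by
      rw [hc, ZMod.val_natCast, Nat.mod_eq_of_lt (by omega)]
    have hcne : c ≠ 0 := by
      intro h
      rw [h, ZMod.val_zero] at hcval
      omega
    refine ⟨c * b⁻¹, mul_ne_zero hcne (inv_ne_zero hb), ?_⟩
    have hxb : c * b⁻¹ * b = c := by
      field_simp
    have h2c : (2 : ZMod p) * c = ((p - 1 : ℕ) : ZMod p) := by
      rw [hc]
      rw [← Nat.cast_ofNat, ← Nat.cast_mul]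
      congr 1
      omega
    have hxa : c * b⁻¹ * a = 1 := by
      rw [ha']
      have : c * b⁻¹ * -(2 * b) = -(2 * c) * (b⁻¹ * b) := by ring
      rw [this, ZMod.inv_mul_of_unit b hb.isUnit, mul_one, h2c]
      have : ((p - 1 : ℕ) : ZMod p) = ((p : ℕ) : ZMod p) - 1 := by
        push_cast [Nat.cast_sub (by omega : 1 ≤ p)]
        ring
      rw [this, ZMod.natCast_self]
      ring
    rw [hxa, hxb, ZMod.val_one, hcval]
    omega
  · rintro n ⟨x, hx, rfl⟩
    have hxb : x * b ≠ 0 := mul_ne_zero hx hb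
    have hk : (x * b).val ≠ 0 := by
      simpa [ZMod.val_eq_zero] using hxb
    have hklt : (x * b).val < p := ZMod.val_lt _
    have hxa : x * a = -(2 * (x * b)) := by rw [ha']; ring
    have h2xb : (2 : ZMod p) * (x * b) ≠ 0 := mul_ne_zero h2ne hxb
    have hvxa : (x * a).val = p - ((2 : ZMod p) * (x * b)).val := by
      rw [hxa, ZMod.neg_val]
      simp [h2xb]
    have hv2 : ((2 : ZMod p) * (x * b)).val = (2 * (x * b).val) % p := by
      rw [ZMod.val_mul, hval2]
    set k := (x * b).val with hkdef
    have hlt : ((2 : ZMod p) * (x * b)).val < p := ZMod.val_lt _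
    rcases lt_or_ge (2 * k) p with h | h
    · rw [hvxa, hv2, Nat.mod_eq_of_lt h]
      omega
    · have : (2 * k) % p = 2 * k - p := by
        rw [Nat.mod_eq_sub_mod h, Nat.mod_eq_of_lt (by omega)]
      rw [hvxa, hv2, this]
      omega
end

section
/- Let p be an odd prime and s : ZMod p → ℕ the canonical lift. If a, b in ZMod p satisfy a + b ≠ 0, a + 2b ≠ 0, and 2a + b ≠ 0 (and (a,b) ≠ (0,0)), then there exists a nonzero x in ZMod p with s(x*a) + s(x*b) ≤ (p-1)/2. -/
set_option maxHeartbeats 1000000 in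
lemma white_core (p A : ℕ) (hp : p.Prime) (h29 : 29 ≤ p) (hA3 : 3 ≤ A) (hA2 : A + 2 ≤ p) :
    ∃ t, 1 ≤ t ∧ 2 * t + 1 ≤ p ∧ (t * A) % p ≤ t := by
  have hp2 : p % 2 = 1 := Nat.odd_iff.mp (hp.odd_of_ne_two (by omega))
  rcases Nat.even_or_odd A with hA | hA
  · -- A even
    obtain ⟨a, rfl⟩ : ∃ a, A = 2 * a := by
      obtain ⟨a, h⟩ := hA; exact ⟨a, by omega⟩
    have ha2 : 2 ≤ a := by omega
    have hdisj : 4*a + 5 ≤ p ∨ 4*a + 3 = p ∨ 4*a + 1 = p ∨ 4*a = p + 1 ∨ 4*a = p + 3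
        ∨ p + 5 ≤ 4*a := by omega
    rcases hdisj with h | h | h | h | h | h
    · -- E1 : 4a + 5 ≤ p
      obtain ⟨a', rfl⟩ : ∃ a', a = a' + 2 := ⟨a - 2, by omega⟩
      obtain ⟨q, r, hqr, hrw⟩ : ∃ q r, (2*a'+3)*q + r = p ∧ r < 2*a'+3 :=
        ⟨p/(2*a'+3), p%(2*a'+3), Nat.div_add_mod p (2*a'+3), Nat.mod_lt _ (by omega)⟩
      have hr1 : 1 ≤ r := by
        rcases Nat.eq_zero_or_pos r with h0 | h0
        · exfalso
          have hd : (2*a'+3) ∣ p := ⟨q, by omega⟩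
          rcases hp.eq_one_or_self_of_dvd _ hd with h' | h' <;> omega
        · exact h0
      have hq1 : 1 ≤ q := by
        rcases Nat.eq_zero_or_pos q with h0 | h0
        · subst h0; simp at hqr; omega
        · exact h0
      obtain ⟨j, hjodd, hj1, hj2⟩ : ∃ j, j % 2 = 1 ∧ q+1 ≤ j ∧ j ≤ q+2 := by
        rcases Nat.even_or_odd q with he | he
        · rw [Nat.even_iff] at he; exact ⟨q+1, by omega, by omega, by omega⟩
        · rw [Nat.odd_iff] at he; exact ⟨q+2, by omega, by omega, by omega⟩
      have hf1 : p + 1 ≤ j * (2*a'+3) := by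
        have h1 : (q+1)*(2*a'+3) ≤ j*(2*a'+3) := Nat.mul_le_mul_right _ hj1
        linarith [hqr, hrw]
      have hkey : 4*(a'+2)*(a'+2) + p ≤ p*(a'+2) + 1 := by
        rcases Nat.lt_or_ge a' 2 with h2 | h2
        · interval_cases a' <;> omega
        · nlinarith [Nat.mul_le_mul_right (a'+1) h]
      have t2 : (2*a'+3) * ((a'+2)*q) + (a'+2)*r = (a'+2)*p := by
        have e : (2*a'+3) * ((a'+2)*q) + (a'+2)*r = (a'+2)*((2*a'+3)*q + r) := by ring
        rw [e, hqr]
      have e2' : (a'+2)*1 ≤ (a'+2)*r := Nat.mul_le_mul_left _ hr1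
      have t3 : (a'+2)*q + 2*(a'+2) + 1 ≤ p := by
        have m2 : (2*a'+3)*((a'+2)*q + 2*(a'+2) + 1) ≤ (2*a'+3)*p := by
          nlinarith [t2, e2', hkey]
        exact Nat.le_of_mul_le_mul_left m2 (by omega)
      have hf2 : (a'+2)*j + 1 ≤ p := by
        have t1 : (a'+2)*j ≤ (a'+2)*(q+2) := Nat.mul_le_mul_left _ hj2
        nlinarith [t1, t3]
      have hjp : j + 2 ≤ p := by
        have h3q : 3*q ≤ (2*a'+3)*q := Nat.mul_le_mul_right q (by omega)
        linarith [hqr]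
      obtain ⟨t, ht⟩ : ∃ t, p = 2*t + j := ⟨(p - j)/2, by omega⟩
      obtain ⟨rr, hrr⟩ : ∃ rr, (a'+2)*j + rr = p := ⟨p - (a'+2)*j, by omega⟩
      refine ⟨t, by omega, by omega, ?_⟩
      have e : t*(2*(a'+2)) = rr + p*(a'+1) := by
        have g1 : ((a':ℤ)+2)*j + rr = p := by exact_mod_cast hrr
        have g2 : (p:ℤ) = 2*t + j := by exact_mod_cast ht
        zify
        linear_combination (-1 : ℤ) * g1 - ((a':ℤ)+2) * g2
      have hrt : rr ≤ t := by linarith [hrr, hf1, ht]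
      rw [e, Nat.add_mul_mod_self_left, Nat.mod_eq_of_lt (by omega)]
      exact hrt
    · -- E3d : 4a + 3 = p
      obtain ⟨q, r10, hq, hr10⟩ : ∃ q r10, p = 10*q + r10 ∧ r10 < 10 :=
        ⟨p/10, p%10, by omega, by omega⟩
      refine ⟨2*q + 3, by omega, by omega, ?_⟩
      have e : (2*q+3)*(2*a) = (2*a - (3*q+3)) + p*(q+1) := by
        zify [show 3*q+3 ≤ 2*a by omega]
        rw [show ((p:ℤ)) = 4*(a:ℤ) + 3 by exact_mod_cast h.symm]
        ring
      rw [e, Nat.add_mul_mod_self_left, Nat.mod_eq_of_lt (by omega)]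
      omega
    · -- E3b : 4a + 1 = p
      obtain ⟨q, r6, hq, hr6⟩ : ∃ q r6, p = 6*q + r6 ∧ r6 < 6 :=
        ⟨p/6, p%6, by omega, by omega⟩
      refine ⟨2*q + 3, by omega, by omega, ?_⟩
      have e : (2*q+3)*(2*a) = (2*a - (q+1)) + p*(q+1) := by
        zify [show q+1 ≤ 2*a by omega]
        rw [show ((p:ℤ)) = 4*(a:ℤ) + 1 by exact_mod_cast h.symm]
        ring
      rw [e, Nat.add_mul_mod_self_left, Nat.mod_eq_of_lt (by omega)]
      omega
    · -- E3a : 4a = p + 1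
      refine ⟨2, by omega, by omega, ?_⟩
      rw [show 2*(2*a) = 1 + p*1 by omega, Nat.add_mul_mod_self_left,
        Nat.mod_eq_of_lt (by omega)]
      omega
    · -- E3c : 4a = p + 3
      obtain ⟨q, r6, hq, hr6⟩ : ∃ q r6, p = 6*q + r6 ∧ r6 < 6 :=
        ⟨p/6, p%6, by omega, by omega⟩
      refine ⟨2*q + 3, by omega, by omega, ?_⟩
      have e : (2*q+3)*(2*a) = (3*q + 6 - 2*a) + p*(q+2) := by
        zify [show 2*a ≤ 3*q+6 by omega]
        rw [show ((p:ℤ)) = 4*(a:ℤ) - 3 by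
          have hz : (4*(a:ℤ)) = (p:ℤ) + 3 := by exact_mod_cast h
          linarith]
        ring
      rw [e, Nat.add_mul_mod_self_left, Nat.mod_eq_of_lt (by omega)]
      omega
    · -- E2 : p + 5 ≤ 4a
      have h2a3 : 2*a + 3 ≤ p := by omega
      obtain ⟨c, hc⟩ : ∃ c, p = 2*a + c := ⟨p - 2*a, by omega⟩
      have hc3 : 3 ≤ c := by omega
      have hcodd : c % 2 = 1 := by omega
      have hc5 : 2*c + 5 ≤ p := by omega
      obtain ⟨q, r, hqr, hrw⟩ : ∃ q r, c*q + r = p ∧ r < c :=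
        ⟨p/c, p%c, Nat.div_add_mod p c, Nat.mod_lt _ (by omega)⟩
      have hr1 : 1 ≤ r := by
        rcases Nat.eq_zero_or_pos r with h0 | h0
        · exfalso
          have hd : c ∣ p := ⟨q, by omega⟩
          rcases hp.eq_one_or_self_of_dvd _ hd with h' | h' <;> omega
        · exact h0
      have hq1 : 1 ≤ q := by
        rcases Nat.eq_zero_or_pos q with h0 | h0
        · subst h0; simp at hqr; omega
        · exact h0
      obtain ⟨j, hjodd, hj1, hj2⟩ : ∃ j, j % 2 = 1 ∧ q+1 ≤ j ∧ j ≤ q+2 := by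
        rcases Nat.even_or_odd q with he | he
        · rw [Nat.even_iff] at he; exact ⟨q+1, by omega, by omega, by omega⟩
        · rw [Nat.odd_iff] at he; exact ⟨q+2, by omega, by omega, by omega⟩
      have hf1 : p + 1 ≤ j * c := by
        have h1 : (q+1)*c ≤ j*c := Nat.mul_le_mul_right _ hj1
        linarith [hqr, hrw]
      have hf1' : p + 2 ≤ j * c := by
        have hjc2 : (j*c) % 2 = 1 := by
          rw [← Nat.odd_iff, Nat.odd_mul]
          exact ⟨Nat.odd_iff.mpr hjodd, Nat.odd_iff.mpr hcodd⟩
        omega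
      have hkey2 : 2*c*c + 2*c + p ≤ p*c + 1 := by
        rcases (show c = 3 ∨ 5 ≤ c by omega) with h3 | h5
        · subst h3; omega
        · obtain ⟨c', rfl⟩ : ∃ c', c = c' + 5 := ⟨c - 5, by omega⟩
          nlinarith [Nat.mul_le_mul_right (c'+4) hc5]
      have hqc : c*q + 1 ≤ p := by omega
      have hstep : (q+2)*(c+1) ≤ 2*p := by
        have hm1 : (c*q + 1)*c ≤ p*c := Nat.mul_le_mul_right c hqc
        have m2 : c*((q+2)*(c+1)) ≤ c*(2*p) := by nlinarith [hm1, hqc, hkey2]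
        exact Nat.le_of_mul_le_mul_left m2 (by omega)
      have hf2 : j*(c+1) ≤ 2*p :=
        le_trans (Nat.mul_le_mul_right _ hj2) hstep
      have h3q : 3*q ≤ c*q := Nat.mul_le_mul_right q (by omega)
      have hj2a : j ≤ 2*a := by linarith [hqr]
      have hjp : j + 2 ≤ p := by linarith [hqr]
      obtain ⟨t, ht⟩ : ∃ t, p = 2*t + j := ⟨(p - j)/2, by omega⟩
      obtain ⟨j₂, rfl⟩ : ∃ j₂, j = 2*j₂ + 1 := ⟨j/2, by omega⟩
      have e2 : 2*(a*(2*j₂+1)) + (2*j₂+1)*c = p*(2*j₂+1) := by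
        rw [hc]; ring
      have hsub : a*(2*j₂+1) + 1 ≤ p*j₂ := by nlinarith [e2, hf1']
      obtain ⟨rr, hrr⟩ : ∃ rr, a*(2*j₂+1) + rr = p*j₂ :=
        ⟨p*j₂ - a*(2*j₂+1), by omega⟩
      obtain ⟨k, hk⟩ : ∃ k, a = j₂ + k := ⟨a - j₂, by omega⟩
      refine ⟨t, by omega, by omega, ?_⟩
      have e : t*(2*a) = rr + p*k := by
        have g1 : (a:ℤ)*(2*(j₂:ℤ)+1) + rr = (p:ℤ)*j₂ := by exact_mod_cast hrr
        have g2 : (p:ℤ) = 2*t + (2*(j₂:ℤ)+1) := by exact_mod_cast ht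
        have g3 : (a:ℤ) = (j₂:ℤ) + k := by exact_mod_cast hk
        zify
        linear_combination (-(1:ℤ))*g1 - ((k:ℤ)+(j₂:ℤ))*g2 + (2*(t:ℤ)+2*(j₂:ℤ)+1)*g3
      have hrt : rr ≤ t := by nlinarith [hrr, e2, hf2, ht]
      rw [e, Nat.add_mul_mod_self_left,
        Nat.mod_eq_of_lt (lt_of_le_of_lt hrt (by omega))]
      exact hrt
  · -- A odd
    obtain ⟨m, rfl⟩ := hA
    obtain ⟨u, hu⟩ : ∃ u, p = 2*u + 1 := ⟨p/2, by omega⟩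
    refine ⟨u, by omega, by omega, ?_⟩
    have e : u * (2*m+1) = (u - m) + p * m := by
      zify [show m ≤ u by omega]
      rw [show ((p:ℤ)) = 2*(u:ℤ) + 1 by exact_mod_cast hu]
      ring
    rw [e, Nat.add_mul_mod_self_left, Nat.mod_eq_of_lt (by omega)]
    omega

set_option maxHeartbeats 1000000 in
theorem stmt_2 (p : ℕ) (hp : p.Prime) (hodd : p ≠ 2) (a b : ZMod p)
    (hab : ¬(a = 0 ∧ b = 0))
    (h1 : a + b ≠ 0) (h2 : a + 2 * b ≠ 0) (h3 : 2 * a + b ≠ 0) :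
    ∃ x : ZMod p, x ≠ 0 ∧ (x * a).val + (x * b).val ≤ (p - 1) / 2 := by
  rcases lt_or_ge p 29 with hsmall | h29
  · have hge := hp.two_le
    interval_cases p <;>
      first
        | (revert hab h1 h2 h3; revert a b; decide)
        | exact absurd hp (by decide)
  · haveI : Fact p.Prime := ⟨hp⟩
    haveI : Fact (1 < p) := ⟨by omega⟩
    by_cases ha : a = 0
    · have hb : b ≠ 0 := fun hb => hab ⟨ha, hb⟩
      refine ⟨b⁻¹, inv_ne_zero hb, ?_⟩
      subst ha
      rw [mul_zero, inv_mul_cancel₀ hb]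
      simp only [ZMod.val_zero, ZMod.val_one]
      omega
    by_cases hb : b = 0
    · refine ⟨a⁻¹, inv_ne_zero ha, ?_⟩
      subst hb
      rw [mul_zero, inv_mul_cancel₀ ha]
      simp only [ZMod.val_zero, ZMod.val_one]
      omega
    · set α := a * (a+b)⁻¹ with hα
      have hα0 : α ≠ 0 := mul_ne_zero ha (inv_ne_zero h1)
      have hmul : α * (a+b) = a := by
        rw [hα, mul_assoc, inv_mul_cancel₀ h1, mul_one]
      have hα1 : α ≠ 1 := by
        intro hone
        rw [hone, one_mul] at hmul
        exact hb (by linear_combination hmul)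
      have hα2 : α ≠ 2 := by
        intro htwo
        rw [htwo] at hmul
        exact h2 (by linear_combination hmul)
      have hαm1 : α ≠ -1 := by
        intro hm
        rw [hm] at hmul
        exact h3 (by linear_combination -hmul)
      have hcast : ((α.val : ℕ) : ZMod p) = α := ZMod.natCast_rightInverse α
      have hA0 : α.val ≠ 0 := fun h => hα0 ((ZMod.val_eq_zero α).mp h)
      have hA1 : α.val ≠ 1 := by
        intro h
        exact hα1 (by rw [← hcast, h]; simp)
      have hA2 : α.val ≠ 2 := by
        intro h
        exact hα2 (by rw [← hcast, h]; simp)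
      have hAp1 : α.val ≠ p - 1 := by
        intro h
        apply hαm1
        rw [← hcast, h]
        have hcp : ((p - 1 : ℕ) : ZMod p) = -1 := by
          push_cast [Nat.cast_sub (show (1:ℕ) ≤ p by omega)]
          simp
        exact hcp
      have hAlt : α.val < p := ZMod.val_lt α
      obtain ⟨t, ht1, ht2, htm⟩ := white_core p α.val hp h29 (by omega) (by omega)
      have htp : t < p := by omega
      have htz : (t : ZMod p) ≠ 0 := by
        intro h0
        have : (t : ZMod p).val = 0 := by rw [h0]; exact ZMod.val_zero
        rw [ZMod.val_cast_of_lt htp] at this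
        omega
      refine ⟨(t : ZMod p) * (a+b)⁻¹, mul_ne_zero htz (inv_ne_zero h1), ?_⟩
      have hxa : (t : ZMod p) * (a+b)⁻¹ * a = ((t * α.val : ℕ) : ZMod p) := by
        push_cast
        rw [hcast, hα]
        ring
      have hva : ((t : ZMod p) * (a+b)⁻¹ * a).val = (t * α.val) % p := by
        rw [hxa, ZMod.val_natCast]
      set s₁ := (t * α.val) % p with hs₁
      have hxa' : (t : ZMod p) * (a+b)⁻¹ * a = ((s₁ : ℕ) : ZMod p) := by
        rw [hxa, hs₁, ZMod.natCast_mod]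
      have hs₁0 : s₁ ≠ 0 := by
        intro h0
        have hz : (t : ZMod p) * (a+b)⁻¹ * a = 0 := by
          rw [hxa', h0]; simp
        exact (mul_ne_zero (mul_ne_zero htz (inv_ne_zero h1)) ha) hz
      have hs₁t : s₁ ≠ t := by
        intro heq
        have hxt : (t : ZMod p) * α = (t : ZMod p) * 1 := by
          rw [mul_one]
          calc (t : ZMod p) * α = (t : ZMod p) * (a+b)⁻¹ * a := by rw [hα]; ring
          _ = ((s₁ : ℕ) : ZMod p) := hxa'
          _ = (t : ZMod p) := by rw [heq]
        exact hα1 (mul_left_cancel₀ htz hxt)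
      have hs₁lt : s₁ < t := lt_of_le_of_ne htm hs₁t
      have hxab : (t : ZMod p) * (a+b)⁻¹ * b = ((t - s₁ : ℕ) : ZMod p) := by
        have hsum : (t : ZMod p) * (a+b)⁻¹ * (a + b) = (t : ZMod p) := by
          rw [mul_assoc, inv_mul_cancel₀ h1, mul_one]
        have e1 : (t : ZMod p) * (a+b)⁻¹ * b
            = (t : ZMod p) * (a+b)⁻¹ * (a + b) - (t : ZMod p) * (a+b)⁻¹ * a := by ring
        rw [hsum, hxa'] at e1
        rw [e1, Nat.cast_sub (le_of_lt hs₁lt)]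
      have hvb : ((t : ZMod p) * (a+b)⁻¹ * b).val = t - s₁ := by
        rw [hxab, ZMod.val_cast_of_lt (by omega)]
      rw [hva, hvb]
      omega
end

section
/- Let p be an odd prime and s : ZMod p → ℕ the canonical lift. Suppose a, b in ZMod p with (a+b)(a+2b)(2a+b) ≠ 0 and there exists a nonzero x with s(x*a) + s(x*b) + s(x*(a+b)) ≤ p. Then for that x, s(x*(a+b)) = s(x*a) + s(x*b) and hence s(x*a) + s(x*b) ≤ p/2, i.e. s(x*a) + s(x*b) ≤ (p-1)/2. -/
theorem stmt_5 (p : ℕ) (hp : p.Prime) (hodd : p ≠ 2) (a b : ZMod p)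
    (h : (a + b) * (a + 2 * b) * (2 * a + b) ≠ 0)
    (x : ZMod p) (hx : x ≠ 0)
    (hle : (x * a).val + (x * b).val + (x * (a + b)).val ≤ p) :
    (x * (a + b)).val = (x * a).val + (x * b).val ∧
    (x * a).val + (x * b).val ≤ (p - 1) / 2 := by
  haveI : Fact p.Prime := ⟨hp⟩
  have hab : a + b ≠ 0 := by
    intro h0
    apply h
    rw [h0, zero_mul, zero_mul]
  have hxab : x * (a + b) ≠ 0 := mul_ne_zero hx hab
  have hC : (x * (a + b)).val = ((x * a).val + (x * b).val) % p := by
    rw [mul_add, ZMod.val_add]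
  have hA : (x * a).val < p := ZMod.val_lt _
  have hB : (x * b).val < p := ZMod.val_lt _
  have hpodd : p % 2 = 1 := Nat.odd_iff.mp (hp.odd_of_ne_two hodd)
  have hvne : (x * (a + b)).val ≠ 0 := by
    simpa [ZMod.val_eq_zero] using hxab
  rcases lt_or_ge ((x * a).val + (x * b).val) p with hlt | hge
  · rw [Nat.mod_eq_of_lt hlt] at hC
    omega
  · have : ((x * a).val + (x * b).val) % p = (x * a).val + (x * b).val - p := by
      omega
    omega
end

section
/- Let p be a prime and let u = (0, a, b, c), v = (0, d, e, f) be vectors in (ZMod p)^4 spanning a 2-dimensional subspace P contained in the hyperplane x₁ = 0. Then there exists a nonzero w in P with s-sum at most p, where s is the canonical lift. (One may use: if a+b+c = 0 apply the 3-dimensional White lemma to u; otherwise apply it to w = (a+b+c)v - (d+e+f)u, which has coordinate sum zero.) -/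
lemma key_sum (p : ℕ) [Fact p.Prime] (x y z : ZMod p) (h : x + y + z = 0)
    (hne : ¬(x = 0 ∧ y = 0 ∧ z = 0)) :
    x.val + y.val + z.val = p ∨ (-x).val + (-y).val + (-z).val = p := by
  have hp : 0 < p := (Fact.out : p.Prime).pos
  have hcast : ((x.val + y.val + z.val : ℕ) : ZMod p) = 0 := by
    push_cast [ZMod.natCast_val, ZMod.cast_id]
    exact h
  have hdvd : p ∣ x.val + y.val + z.val := (ZMod.natCast_eq_zero_iff _ _).mp hcast
  have hx := ZMod.val_lt x
  have hy := ZMod.val_lt y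
  have hz := ZMod.val_lt z
  obtain ⟨k, hk⟩ := hdvd
  have hk2 : k ≤ 2 := by nlinarith
  interval_cases k
  · -- sum = 0 : all zero, contradiction
    exfalso
    apply hne
    simp only [Nat.mul_zero] at hk
    refine ⟨?_, ?_, ?_⟩ <;>
      [skip; skip; skip] <;>
    · rw [← ZMod.val_eq_zero]; omega
  · left; omega
  · -- sum = 2p : all nonzero
    right
    have hx0 : x ≠ 0 := by
      intro h0; rw [h0, ZMod.val_zero] at hk; omega
    have hy0 : y ≠ 0 := by
      intro h0; rw [h0, ZMod.val_zero] at hk; omega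
    have hz0 : z ≠ 0 := by
      intro h0; rw [h0, ZMod.val_zero] at hk; omega
    rw [ZMod.neg_val, ZMod.neg_val, ZMod.neg_val]
    simp [hx0, hy0, hz0]
    omega

lemma pick_w (p : ℕ) [Fact p.Prime] (S : Submodule (ZMod p) (Fin 4 → ZMod p))
    (q : Fin 4 → ZMod p) (hq : q ∈ S) (h0 : q 0 = 0)
    (hsum : q 1 + q 2 + q 3 = 0) (hne : q ≠ 0) :
    ∃ w ∈ S, w ≠ 0 ∧ ∑ i, (w i).val ≤ p := by
  have hne' : ¬(q 1 = 0 ∧ q 2 = 0 ∧ q 3 = 0) := by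
    rintro ⟨h1, h2, h3⟩
    apply hne
    funext i
    fin_cases i <;> simpa
  rcases key_sum p (q 1) (q 2) (q 3) hsum hne' with h | h
  · exact ⟨q, hq, hne, by rw [Fin.sum_univ_four, h0]; simp; omega⟩
  · refine ⟨-q, S.neg_mem hq, neg_ne_zero.mpr hne, ?_⟩
    rw [Fin.sum_univ_four]
    simp only [Pi.neg_apply, h0, neg_zero, ZMod.val_zero]
    omega

theorem stmt_8 (p : ℕ) [Fact p.Prime] (a b c d e f : ZMod p)
    (u v : Fin 4 → ZMod p)
    (hu : u = ![0, a, b, c]) (hv : v = ![0, d, e, f])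
    (hdim : Module.finrank (ZMod p)
      (Submodule.span (ZMod p) ({u, v} : Set (Fin 4 → ZMod p))) = 2) :
    ∃ w ∈ Submodule.span (ZMod p) ({u, v} : Set (Fin 4 → ZMod p)),
      w ≠ 0 ∧ ∑ i, (w i).val ≤ p := by
  have huS : u ∈ Submodule.span (ZMod p) ({u, v} : Set (Fin 4 → ZMod p)) :=
    Submodule.subset_span (by simp)
  set S := Submodule.span (ZMod p) ({u, v} : Set (Fin 4 → ZMod p)) with hS
  have hvS : v ∈ S := Submodule.subset_span (by simp)
  by_cases h1 : a + b + c = 0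
  · -- use u
    have hune : u ≠ 0 := by
      intro h0
      have h2 : S = Submodule.span (ZMod p) ({v} : Set (Fin 4 → ZMod p)) := by
        rw [hS, h0]
        exact Submodule.span_insert_zero
      rw [h2] at hdim
      have h3 := finrank_span_le_card (R := ZMod p) ({v} : Set (Fin 4 → ZMod p))
      simp at h3
      omega
    exact pick_w p S u huS (by simp [hu]) (by simp [hu]; exact h1) hune
  · -- use (a+b+c) • v - (d+e+f) • u
    set q : Fin 4 → ZMod p := (a + b + c) • v - (d + e + f) • u with hq
    have hqS : q ∈ S := S.sub_mem (S.smul_mem _ hvS) (S.smul_mem _ huS)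
    have hqne : q ≠ 0 := by
      intro h0
      have heq : (a + b + c) • v = (d + e + f) • u := by
        rw [hq] at h0
        exact sub_eq_zero.mp h0
      have hv' : v = ((a + b + c)⁻¹ * (d + e + f)) • u := by
        have := congrArg (fun w => (a + b + c)⁻¹ • w) heq
        simpa [smul_smul, inv_mul_cancel₀ h1] using this
      have hvspan : v ∈ Submodule.span (ZMod p) ({u} : Set (Fin 4 → ZMod p)) := by
        rw [hv']
        exact Submodule.smul_mem _ _ (Submodule.mem_span_singleton_self u)
      have h2 : S = Submodule.span (ZMod p) ({u} : Set (Fin 4 → ZMod p)) := by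
        rw [hS, Set.pair_comm]
        exact Submodule.span_insert_eq_span hvspan
      rw [h2] at hdim
      have h3 := finrank_span_le_card (R := ZMod p) ({u} : Set (Fin 4 → ZMod p))
      simp at h3
      omega
    refine pick_w p S q hqS ?_ ?_ hqne
    · simp [hq, hu, hv]
    · simp [hq, hu, hv]
      ring
end

section
/- Let p be a prime not dividing integers a, b, and let L be the subgroup of ℚ^5 generated by ℤ^5, (1/p)(1,-1,0,0,a), and (1/p)(0,0,1,-1,b). If Q = (x₁,...,x₅) in L satisfies xᵢ ≥ 0 for all i and x₁+x₂+x₃+x₄+x₅ ≤ 1, then Q in ℤ^5. -/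
/-- The lattice generated by `ℤ^5`, `(1/p)(1,-1,0,0,a)` and `(1/p)(0,0,1,-1,b)`. -/
def latticeL (p : ℕ) (a b : ℤ) : AddSubgroup (Fin 5 → ℚ) :=
  AddSubgroup.closure
    ((Set.range fun v : Fin 5 → ℤ => fun i => (v i : ℚ)) ∪
      {(![1 / p, -1 / p, 0, 0, (a : ℚ) / p] : Fin 5 → ℚ), (![0, 0, 1 / p, -1 / p, (b : ℚ) / p] : Fin 5 → ℚ)})

private lemma key_frac (m m' : ℤ) (t : ℚ) (ht0 : 0 < t) (ht1 : t < 1)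
    (h1 : 0 ≤ (m : ℚ) + t) (h2 : 0 ≤ (m' : ℚ) - t) :
    1 ≤ ((m : ℚ) + t) + ((m' : ℚ) - t) := by
  have hm : (0 : ℚ) ≤ m := by
    have : (-1 : ℚ) < m := by linarith
    have : (-1 : ℤ) < m := by exact_mod_cast this
    exact_mod_cast by omega
  have hm' : (1 : ℚ) ≤ m' := by
    have : (0 : ℚ) < m' := by linarith
    have : (0 : ℤ) < m' := by exact_mod_cast this
    exact_mod_cast this
  linarith

private lemma mem_struct (p : ℕ) (a b : ℤ) {Q : Fin 5 → ℚ} (hQ : Q ∈ latticeL p a b) :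
    ∃ (n : Fin 5 → ℤ) (j k : ℤ),
      Q = (fun i => (n i : ℚ)) + j • (![1 / p, -1 / p, 0, 0, (a : ℚ) / p] : Fin 5 → ℚ)
            + k • (![0, 0, 1 / p, -1 / p, (b : ℚ) / p] : Fin 5 → ℚ) := by
  set w1 : Fin 5 → ℚ := ![1 / p, -1 / p, 0, 0, (a : ℚ) / p] with hw1
  set w2 : Fin 5 → ℚ := ![0, 0, 1 / p, -1 / p, (b : ℚ) / p] with hw2
  let S : AddSubgroup (Fin 5 → ℚ) :=
    { carrier := {Q | ∃ (n : Fin 5 → ℤ) (j k : ℤ),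
        Q = (fun i => (n i : ℚ)) + j • w1 + k • w2}
      zero_mem' := ⟨0, 0, 0, by funext x; simp⟩
      add_mem' := by
        rintro x y ⟨n, j, k, rfl⟩ ⟨n', j', k', rfl⟩
        refine ⟨n + n', j + j', k + k', ?_⟩
        have hc : (fun i => ((n + n') i : ℚ)) = (fun i => (n i : ℚ)) + fun i => (n' i : ℚ) := by
          funext i; simp
        rw [hc, add_smul, add_smul]; abel
      neg_mem' := by
        rintro x ⟨n, j, k, rfl⟩
        refine ⟨-n, -j, -k, ?_⟩
        have hc : (fun i => ((-n) i : ℚ)) = -(fun i => (n i : ℚ)) := by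
          funext i; simp
        rw [hc, neg_smul, neg_smul]; abel }
  have hle : latticeL p a b ≤ S := by
    rw [latticeL, AddSubgroup.closure_le]
    intro x hx
    simp only [Set.mem_union, Set.mem_range, Set.mem_insert_iff, Set.mem_singleton_iff] at hx
    rcases hx with ⟨v, rfl⟩ | rfl | rfl
    · exact ⟨v, 0, 0, by funext x; simp⟩
    · exact ⟨0, 1, 0, by funext x; fin_cases x <;> simp [hw1, Matrix.vecHead, Matrix.vecTail, Function.comp]⟩
    · exact ⟨0, 0, 1, by funext x; fin_cases x <;> simp [hw2, Matrix.vecHead, Matrix.vecTail, Function.comp]⟩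
  exact hle hQ

theorem stmt_13 (p : ℕ) (hp : p.Prime) (a b : ℤ)
    (hpa : ¬(p : ℤ) ∣ a) (hpb : ¬(p : ℤ) ∣ b)
    (Q : Fin 5 → ℚ) (hQ : Q ∈ latticeL p a b)
    (hnonneg : ∀ i, 0 ≤ Q i) (hsum : ∑ i, Q i ≤ 1) :
    ∃ v : Fin 5 → ℤ, Q = fun i => (v i : ℚ) := by
  obtain ⟨n, j, k, hQeq⟩ := mem_struct p a b hQ
  have hp0 : (0 : ℚ) < p := by exact_mod_cast hp.pos
  have hpZ : (0 : ℤ) < p := by exact_mod_cast hp.pos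
  have hpne : (p : ℚ) ≠ 0 := ne_of_gt hp0
  have h0 : Q 0 = (n 0 : ℚ) + j / p := by
    have := congrFun hQeq 0
    simp [Pi.add_apply, Pi.smul_apply, Matrix.vecHead, Matrix.vecTail, Function.comp,
      show (Fin.succ 2 : Fin 5) = 3 from rfl, show ((Fin.succ 2).succ : Fin 5) = 4 from rfl, show (Fin.succ 3 : Fin 5) = 4 from rfl,
      show (Fin.succ 1 : Fin 5) = 2 from rfl, show (Fin.succ 0 : Fin 5) = 1 from rfl] at this
    rw [this]; push_cast; ring
  have h1 : Q 1 = (n 1 : ℚ) - j / p := by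
    have := congrFun hQeq 1
    simp [Pi.add_apply, Pi.smul_apply, Matrix.vecHead, Matrix.vecTail, Function.comp,
      show (Fin.succ 2 : Fin 5) = 3 from rfl, show ((Fin.succ 2).succ : Fin 5) = 4 from rfl, show (Fin.succ 3 : Fin 5) = 4 from rfl,
      show (Fin.succ 1 : Fin 5) = 2 from rfl, show (Fin.succ 0 : Fin 5) = 1 from rfl] at this
    rw [this]; push_cast; ring
  have h2 : Q 2 = (n 2 : ℚ) + k / p := by
    have := congrFun hQeq 2
    simp [Pi.add_apply, Pi.smul_apply, Matrix.vecHead, Matrix.vecTail, Function.comp,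
      show (Fin.succ 2 : Fin 5) = 3 from rfl, show ((Fin.succ 2).succ : Fin 5) = 4 from rfl, show (Fin.succ 3 : Fin 5) = 4 from rfl,
      show (Fin.succ 1 : Fin 5) = 2 from rfl, show (Fin.succ 0 : Fin 5) = 1 from rfl] at this
    rw [this]; push_cast; ring
  have h3 : Q 3 = (n 3 : ℚ) - k / p := by
    have := congrFun hQeq 3
    simp [Pi.add_apply, Pi.smul_apply, Matrix.vecHead, Matrix.vecTail, Function.comp,
      show (Fin.succ 2 : Fin 5) = 3 from rfl, show ((Fin.succ 2).succ : Fin 5) = 4 from rfl, show (Fin.succ 3 : Fin 5) = 4 from rfl,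
      show (Fin.succ 1 : Fin 5) = 2 from rfl, show (Fin.succ 0 : Fin 5) = 1 from rfl] at this
    rw [this]; push_cast; ring
  have h4 : Q 4 = (n 4 : ℚ) + ((j * a + k * b : ℤ) : ℚ) / p := by
    have := congrFun hQeq 4
    simp [Pi.add_apply, Pi.smul_apply, Matrix.vecHead, Matrix.vecTail, Function.comp,
      show (Fin.succ 2 : Fin 5) = 3 from rfl, show ((Fin.succ 2).succ : Fin 5) = 4 from rfl, show (Fin.succ 3 : Fin 5) = 4 from rfl,
      show (Fin.succ 1 : Fin 5) = 2 from rfl, show (Fin.succ 0 : Fin 5) = 1 from rfl] at this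
    rw [this]; push_cast; ring
  -- generic claim: nontrivial fractional part forces the pair to have sum ≥ 1
  have claim : ∀ (m m' c : ℤ), ¬ (p : ℤ) ∣ c →
      0 ≤ (m : ℚ) + c / p → 0 ≤ (m' : ℚ) - c / p →
      1 ≤ ((m : ℚ) + c / p) + ((m' : ℚ) - c / p) := by
    intro m m' c hnd hA hB
    have hdm : (p : ℤ) * (c / p) + c % p = c := Int.mul_ediv_add_emod c p
    have hr0 : 0 < c % p := by
      rcases (Int.emod_nonneg c (ne_of_gt hpZ)).lt_or_eq with h | h
      · exact h
      · exact absurd (Int.dvd_of_emod_eq_zero h.symm) hnd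
    have hrp : c % p < p := Int.emod_lt_of_pos c hpZ
    set t : ℚ := ((c % p : ℤ) : ℚ) / p with hts
    have ht0 : 0 < t := by
      apply div_pos _ hp0; exact_mod_cast hr0
    have ht1 : t < 1 := by
      rw [hts, div_lt_one hp0]; exact_mod_cast hrp
    have hcast : (p : ℚ) * ((c / p : ℤ) : ℚ) + ((c % p : ℤ) : ℚ) = (c : ℚ) := by
      exact_mod_cast hdm
    have hsplit : (c : ℚ) / p = ((c / p : ℤ) : ℚ) + ((c % p : ℤ) : ℚ) / p := by
      rw [← hcast, add_div, mul_div_cancel_left₀ _ hpne]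
    have e0 : (m : ℚ) + c / p = ((m + c / p : ℤ) : ℚ) + t := by
      rw [hsplit, hts]; push_cast; ring
    have e1' : (m' : ℚ) - c / p = ((m' - c / p : ℤ) : ℚ) - t := by
      rw [hsplit, hts]; push_cast; ring
    rw [e0] at hA ⊢
    rw [e1'] at hB ⊢
    exact key_frac _ _ t ht0 ht1 hA hB
  rw [Fin.sum_univ_five] at hsum
  have hQ4pos : ¬ (p : ℤ) ∣ (j * a + k * b) → 0 < Q 4 := by
    intro hnd
    rcases (hnonneg 4).lt_or_eq with h | h
    · exact h
    · exfalso
      apply hnd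
      rw [h4] at h
      have : ((j * a + k * b : ℤ) : ℚ) = (-(n 4) : ℤ) * p := by
        push_cast
        field_simp at h ⊢
        push_cast at h; linarith
      have hz : (j * a + k * b : ℤ) = -(n 4) * p := by exact_mod_cast this
      exact ⟨-(n 4), by linarith⟩
  have hPrime : Prime (p : ℤ) := Nat.prime_iff_prime_int.mp hp
  have hdj : (p : ℤ) ∣ j := by
    by_contra hnd
    have h01 : 1 ≤ Q 0 + Q 1 := by
      rw [h0, h1]
      exact claim _ _ _ hnd (h0 ▸ hnonneg 0) (h1 ▸ hnonneg 1)
    by_cases hk : (p : ℤ) ∣ k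
    · have hnd4 : ¬ (p : ℤ) ∣ (j * a + k * b) := by
        intro hd
        have : (p : ℤ) ∣ j * a := by
          have := dvd_sub hd (hk.mul_right b)
          simpa using this
        rcases hPrime.dvd_mul.mp this with h | h
        exacts [hnd h, hpa h]
      have := hQ4pos hnd4
      linarith [hnonneg 2, hnonneg 3]
    · have h23 : 1 ≤ Q 2 + Q 3 := by
        rw [h2, h3]
        exact claim _ _ _ hk (h2 ▸ hnonneg 2) (h3 ▸ hnonneg 3)
      linarith [hnonneg 4]
  have hdk : (p : ℤ) ∣ k := by
    by_contra hnd
    have h23 : 1 ≤ Q 2 + Q 3 := by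
      rw [h2, h3]
      exact claim _ _ _ hnd (h2 ▸ hnonneg 2) (h3 ▸ hnonneg 3)
    have hnd4 : ¬ (p : ℤ) ∣ (j * a + k * b) := by
      intro hd
      have : (p : ℤ) ∣ k * b := by
        have := dvd_sub hd (hdj.mul_right a)
        simpa [mul_comm] using this
      rcases hPrime.dvd_mul.mp this with h | h
      exacts [hnd h, hpb h]
    have := hQ4pos hnd4
    linarith [hnonneg 0, hnonneg 1]
  obtain ⟨d, rfl⟩ := hdj
  obtain ⟨e, rfl⟩ := hdk
  refine ⟨![n 0 + d, n 1 - d, n 2 + e, n 3 - e, n 4 + d * a + e * b], ?_⟩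
  funext i
  fin_cases i <;>
    simp only [Matrix.cons_val_zero, Matrix.cons_val_one, Matrix.head_cons,
      Matrix.cons_val_fin_one, Matrix.cons_val', Matrix.empty_val'] <;>
    [rw [show (⟨0, by omega⟩ : Fin 5) = 0 from rfl, h0];
     rw [show (⟨1, by omega⟩ : Fin 5) = 1 from rfl, h1];
     rw [show (⟨2, by omega⟩ : Fin 5) = 2 from rfl, h2];
     rw [show (⟨3, by omega⟩ : Fin 5) = 3 from rfl, h3];
     rw [show (⟨4, by omega⟩ : Fin 5) = 4 from rfl, h4]] <;>
    push_cast <;> field_simp <;> ring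
end

section
/- Let Δ be the 4-dimensional simplex in ℝ^4 with vertices 0, e₁, e₂, e₃, and (6,14,17,65). Then Δ is an empty lattice simplex: the only points of ℤ^4 contained in Δ are its five vertices. -/
theorem stmt_15 :
    ∀ x : Fin 4 → ℤ,
      (fun i => (x i : ℝ)) ∈ convexHull ℝ
        ({0, ![1,0,0,0], ![0,1,0,0], ![0,0,1,0], ![6,14,17,65]} : Set (Fin 4 → ℝ)) →
      (fun i => (x i : ℝ)) ∈
        ({0, ![1,0,0,0], ![0,1,0,0], ![0,0,1,0], ![6,14,17,65]} : Set (Fin 4 → ℝ)) := by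
  intro x hx
  set P : Set (Fin 4 → ℝ) := {y | 0 ≤ y 3 ∧ 6 * y 3 ≤ 65 * y 0 ∧ 14 * y 3 ≤ 65 * y 1 ∧
      17 * y 3 ≤ 65 * y 2 ∧ 65 * (y 0 + y 1 + y 2) ≤ 65 + 36 * y 3} with hP
  have hconv : Convex ℝ P := by
    intro u hu v hv a b ha hb hab
    simp only [hP, Set.mem_setOf_eq, Pi.add_apply, Pi.smul_apply, smul_eq_mul] at *
    obtain ⟨h1, h2, h3, h4, h5⟩ := hu
    obtain ⟨g1, g2, g3, g4, g5⟩ := hv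
    refine ⟨?_, ?_, ?_, ?_, ?_⟩ <;> nlinarith [mul_le_mul_of_nonneg_left h2 ha,
      mul_le_mul_of_nonneg_left g2 hb, mul_le_mul_of_nonneg_left h3 ha,
      mul_le_mul_of_nonneg_left g3 hb, mul_le_mul_of_nonneg_left h4 ha,
      mul_le_mul_of_nonneg_left g4 hb, mul_le_mul_of_nonneg_left h5 hb,
      mul_le_mul_of_nonneg_left h1 ha, mul_le_mul_of_nonneg_left g1 hb,
      mul_le_mul_of_nonneg_left h5 ha, mul_le_mul_of_nonneg_left g5 hb]
  have hsub : ({0, ![1,0,0,0], ![0,1,0,0], ![0,0,1,0], ![6,14,17,65]} : Set (Fin 4 → ℝ)) ⊆ P := by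
    intro y hy
    simp only [Set.mem_insert_iff, Set.mem_singleton_iff] at hy
    rcases hy with rfl | rfl | rfl | rfl | rfl <;>
      simp only [hP, Set.mem_setOf_eq, Pi.zero_apply, Matrix.cons_val_zero, Matrix.cons_val_one,
        Matrix.head_cons, Matrix.cons_val_two, Matrix.tail_cons, Matrix.cons_val_three] <;>
      norm_num
  have hxP := convexHull_min hsub hconv hx
  simp only [hP, Set.mem_setOf_eq] at hxP
  obtain ⟨h1, h2, h3, h4, h5⟩ := hxP
  have i1 : (0:ℤ) ≤ x 3 := by exact_mod_cast h1
  have i2 : 6 * x 3 ≤ 65 * x 0 := by exact_mod_cast h2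
  have i3 : 14 * x 3 ≤ 65 * x 1 := by exact_mod_cast h3
  have i4 : 17 * x 3 ≤ 65 * x 2 := by exact_mod_cast h4
  have i5 : 65 * (x 0 + x 1 + x 2) ≤ 65 + 36 * x 3 := by exact_mod_cast h5
  have key : (x 0 = 0 ∧ x 1 = 0 ∧ x 2 = 0 ∧ x 3 = 0) ∨
      (x 0 = 1 ∧ x 1 = 0 ∧ x 2 = 0 ∧ x 3 = 0) ∨
      (x 0 = 0 ∧ x 1 = 1 ∧ x 2 = 0 ∧ x 3 = 0) ∨
      (x 0 = 0 ∧ x 1 = 0 ∧ x 2 = 1 ∧ x 3 = 0) ∨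
      (x 0 = 6 ∧ x 1 = 14 ∧ x 2 = 17 ∧ x 3 = 65) := by
    have hub : x 3 ≤ 65 := by omega
    interval_cases h : (x 3) <;> omega
  simp only [Set.mem_insert_iff, Set.mem_singleton_iff]
  rcases key with ⟨e0,e1,e2,e3⟩ | ⟨e0,e1,e2,e3⟩ | ⟨e0,e1,e2,e3⟩ | ⟨e0,e1,e2,e3⟩ | ⟨e0,e1,e2,e3⟩
  · left; funext i; fin_cases i <;> simp [e0, e1, e2, e3]
  · right; left; funext i; fin_cases i <;> simp [e0, e1, e2, e3]
  · right; right; left; funext i; fin_cases i <;> simp [e0, e1, e2, e3]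
  · right; right; right; left; funext i; fin_cases i <;> simp [e0, e1, e2, e3]
  · right; right; right; right; funext i; fin_cases i <;> simp [e0, e1, e2, e3]
end
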